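/- Fix an integer k ≥ 1 and define ε(2)_q = min(q+1, 2k−q−1) for 0 ≤ q < 2k, and λ(2,2)_m = (3/(2k³)) Σ_{q=0}^{2k−m−1} ε(2)_q ε(2)_{q+m} for 0 ≤ m ≤ 2k−1. Then (1/k) · Σ_{m=1}^{2k−1} (λ(2,2)_m)² → 151/280 as k → ∞. -/
import Mathlib


open Filter

/-- The weight sequence `ε(2)_q = min(q+1, 2k−q−1)`. -/
noncomputable def eps2 (k q : ℕ) : ℝ := min ((q : ℝ) + 1) (2 * (k : ℝ) - (q : ℝ) - 1)

/-- The weight `λ(2,2)_m = (3/(2k³)) Σ_{q=0}^{2k−m−1} ε(2)_q ε(2)_{q+m}`. -/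
noncomputable def lam22 (k m : ℕ) : ℝ :=
  (3 / (2 * (k : ℝ) ^ 3)) * ∑ q ∈ Finset.range (2 * k - m), eps2 k q * eps2 k (q + m)

/-- Faulhaber antiderivative: value of `∑_{q<n} (c6 q^6 + ... + c0)` as a polynomial in `n`. -/
noncomputable def fau (c0 c1 c2 c3 c4 c5 c6 : ℝ) (x : ℝ) : ℝ :=
  c6 * (x^7/7 - x^6/2 + x^5/2 - x^3/6 + x/42)
  + c5 * (x^6/6 - x^5/2 + 5*x^4/12 - x^2/12)
  + c4 * (x^5/5 - x^4/2 + x^3/3 - x/30)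
  + c3 * (x^4/4 - x^3/2 + x^2/4)
  + c2 * (x^3/3 - x^2/2 + x/6)
  + c1 * (x^2/2 - x/2)
  + c0 * x

lemma sum_sextic_range (c0 c1 c2 c3 c4 c5 c6 : ℝ) (n : ℕ) :
    ∑ q ∈ Finset.range n,
      (c6*(q:ℝ)^6 + c5*(q:ℝ)^5 + c4*(q:ℝ)^4 + c3*(q:ℝ)^3 + c2*(q:ℝ)^2 + c1*(q:ℝ) + c0)
    = fau c0 c1 c2 c3 c4 c5 c6 (n : ℝ) := by
  induction n with
  | zero => norm_num [fau]
  | succ n ih =>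
    rw [Finset.sum_range_succ, ih]
    simp only [fau]
    push_cast
    ring

lemma sum_sextic_Ico (c0 c1 c2 c3 c4 c5 c6 : ℝ) (a b : ℕ) (hab : a ≤ b) :
    ∑ q ∈ Finset.Ico a b,
      (c6*(q:ℝ)^6 + c5*(q:ℝ)^5 + c4*(q:ℝ)^4 + c3*(q:ℝ)^3 + c2*(q:ℝ)^2 + c1*(q:ℝ) + c0)
    = fau c0 c1 c2 c3 c4 c5 c6 (b : ℝ) - fau c0 c1 c2 c3 c4 c5 c6 (a : ℝ) := by
  rw [Finset.sum_Ico_eq_sub _ hab, sum_sextic_range, sum_sextic_range]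

/-- Closed form for the correlation sum when `1 ≤ m ≤ k`. -/
lemma Tsum1 (k m : ℕ) (hm1 : 1 ≤ m) (hm2 : m ≤ k) :
    ∑ q ∈ Finset.range (2 * k - m), eps2 k q * eps2 k (q + m)
    = 2/3*(k:ℝ)^3 + (k:ℝ)/3 - (k:ℝ)*(m:ℝ)^2 + (m:ℝ)^3/2 - (m:ℝ)/2 := by
  rw [Finset.range_eq_Ico,
    ← Finset.sum_Ico_consecutive _ (Nat.zero_le k) (show k ≤ 2*k - m by omega),
    ← Finset.sum_Ico_consecutive _ (Nat.zero_le (k - m)) (show k - m ≤ k by omega)]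
  have e1 : ∀ q ∈ Finset.Ico 0 (k - m), eps2 k q * eps2 k (q + m)
      = (0:ℝ)*(q:ℝ)^6 + 0*(q:ℝ)^5 + 0*(q:ℝ)^4 + 0*(q:ℝ)^3 + 1*(q:ℝ)^2
        + ((m:ℝ)+2)*(q:ℝ) + ((m:ℝ)+1) := by
    intro q hq
    simp only [Finset.mem_Ico] at hq
    have hq1 : (q:ℝ) + 1 ≤ (k:ℝ) := by exact_mod_cast (show q + 1 ≤ k by omega)
    have hq2 : (q:ℝ) + (m:ℝ) + 1 ≤ (k:ℝ) := by exact_mod_cast (show q + m + 1 ≤ k by omega)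
    unfold eps2
    push_cast
    rw [min_eq_left (by linarith), min_eq_left (by linarith)]
    ring
  have e2 : ∀ q ∈ Finset.Ico (k - m) k, eps2 k q * eps2 k (q + m)
      = (0:ℝ)*(q:ℝ)^6 + 0*(q:ℝ)^5 + 0*(q:ℝ)^4 + 0*(q:ℝ)^3 + (-1)*(q:ℝ)^2
        + (2*(k:ℝ) - (m:ℝ) - 2)*(q:ℝ) + (2*(k:ℝ) - (m:ℝ) - 1) := by
    intro q hq
    simp only [Finset.mem_Ico] at hq
    have hq1 : (q:ℝ) + 1 ≤ (k:ℝ) := by exact_mod_cast (show q + 1 ≤ k by omega)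
    have hq2 : (k:ℝ) ≤ (q:ℝ) + (m:ℝ) := by exact_mod_cast (show k ≤ q + m by omega)
    unfold eps2
    push_cast
    rw [min_eq_left (by linarith), min_eq_right (by linarith)]
    ring
  have e3 : ∀ q ∈ Finset.Ico k (2*k - m), eps2 k q * eps2 k (q + m)
      = (0:ℝ)*(q:ℝ)^6 + 0*(q:ℝ)^5 + 0*(q:ℝ)^4 + 0*(q:ℝ)^3 + 1*(q:ℝ)^2
        + (-(4*(k:ℝ) - (m:ℝ) - 2))*(q:ℝ) + ((2*(k:ℝ)-1)*(2*(k:ℝ)-(m:ℝ)-1)) := by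
    intro q hq
    simp only [Finset.mem_Ico] at hq
    have hq1 : (k:ℝ) ≤ (q:ℝ) := by exact_mod_cast hq.1
    have hq2 : (k:ℝ) ≤ (q:ℝ) + (m:ℝ) := by exact_mod_cast (show k ≤ q + m by omega)
    unfold eps2
    push_cast
    rw [min_eq_right (by linarith), min_eq_right (by linarith)]
    ring
  rw [Finset.sum_congr rfl e1, Finset.sum_congr rfl e2, Finset.sum_congr rfl e3,
    sum_sextic_Ico _ _ _ _ _ _ _ _ _ (Nat.zero_le _),
    sum_sextic_Ico _ _ _ _ _ _ _ _ _ (show k - m ≤ k by omega),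
    sum_sextic_Ico _ _ _ _ _ _ _ _ _ (show k ≤ 2*k - m by omega)]
  simp only [fau]
  rw [Nat.cast_sub hm2, Nat.cast_sub (show m ≤ 2*k by omega)]
  push_cast
  ring

/-- Closed form for the correlation sum when `k ≤ m ≤ 2k`. -/
lemma Tsum2 (k m : ℕ) (hm1 : k ≤ m) (hm2 : m ≤ 2*k) :
    ∑ q ∈ Finset.range (2 * k - m), eps2 k q * eps2 k (q + m)
    = 4/3*(k:ℝ)^3 - 2*(k:ℝ)^2*(m:ℝ) + (k:ℝ)*(m:ℝ)^2 - (k:ℝ)/3 - (m:ℝ)^3/6 + (m:ℝ)/6 := by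
  rw [Finset.range_eq_Ico]
  have e1 : ∀ q ∈ Finset.Ico 0 (2*k - m), eps2 k q * eps2 k (q + m)
      = (0:ℝ)*(q:ℝ)^6 + 0*(q:ℝ)^5 + 0*(q:ℝ)^4 + 0*(q:ℝ)^3 + (-1)*(q:ℝ)^2
        + (2*(k:ℝ) - (m:ℝ) - 2)*(q:ℝ) + (2*(k:ℝ) - (m:ℝ) - 1) := by
    intro q hq
    simp only [Finset.mem_Ico] at hq
    have hq1 : (q:ℝ) + 1 ≤ (k:ℝ) := by exact_mod_cast (show q + 1 ≤ k by omega)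
    have hq2 : (k:ℝ) ≤ (q:ℝ) + (m:ℝ) := by exact_mod_cast (show k ≤ q + m by omega)
    unfold eps2
    push_cast
    rw [min_eq_left (by linarith), min_eq_right (by linarith)]
    ring
  rw [Finset.sum_congr rfl e1,
    sum_sextic_Ico _ _ _ _ _ _ _ _ _ (Nat.zero_le _)]
  simp only [fau]
  rw [Nat.cast_sub hm2]
  push_cast
  ring

/-- The limiting polynomial in `1/k`. -/
noncomputable def Fpoly (x : ℝ) : ℝ :=
  9/4 * (151/630 - 2/9*x + 1/9*x^2 - 2/9*x^3 + 7/90*x^4 - 1/18*x^5 + 1/14*x^6)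

set_option maxHeartbeats 2000000 in
lemma key (k : ℕ) (hk : 1 ≤ k) :
    (1 / (k : ℝ)) * ∑ m ∈ Finset.Icc 1 (2 * k - 1), (lam22 k m) ^ 2
    = Fpoly ((k : ℝ)⁻¹) := by
  have hK1 : (1:ℝ) ≤ (k:ℝ) := by exact_mod_cast hk
  have hK0 : (k:ℝ) ≠ 0 := by linarith
  have hIcc : Finset.Icc 1 (2*k - 1) = Finset.Ico 1 (2*k) := by
    rw [← Finset.Ico_add_one_right_eq_Icc]
    congr 1
    omega
  rw [hIcc, ← Finset.sum_Ico_consecutive _ (show 1 ≤ k+1 by omega) (show k+1 ≤ 2*k by omega)]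
  have e1 : ∀ m ∈ Finset.Ico 1 (k+1), (lam22 k m)^2
      = (9/(4*(k:ℝ)^6)*(1/4))*(m:ℝ)^6 + (9/(4*(k:ℝ)^6)*(-(k:ℝ)))*(m:ℝ)^5
        + (9/(4*(k:ℝ)^6)*((k:ℝ)^2 - 1/2))*(m:ℝ)^4
        + (9/(4*(k:ℝ)^6)*(2/3*(k:ℝ)^3 + 4/3*(k:ℝ)))*(m:ℝ)^3
        + (9/(4*(k:ℝ)^6)*(-4/3*(k:ℝ)^4 - 2/3*(k:ℝ)^2 + 1/4))*(m:ℝ)^2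
        + (9/(4*(k:ℝ)^6)*(-2/3*(k:ℝ)^3 - 1/3*(k:ℝ)))*(m:ℝ)
        + (9/(4*(k:ℝ)^6)*(4/9*(k:ℝ)^6 + 4/9*(k:ℝ)^4 + 1/9*(k:ℝ)^2)) := by
    intro m hm
    simp only [Finset.mem_Ico] at hm
    unfold lam22
    rw [Tsum1 k m hm.1 (by omega)]
    ring
  have e2 : ∀ m ∈ Finset.Ico (k+1) (2*k), (lam22 k m)^2
      = (9/(4*(k:ℝ)^6)*(1/36))*(m:ℝ)^6 + (9/(4*(k:ℝ)^6)*(-1/3*(k:ℝ)))*(m:ℝ)^5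
        + (9/(4*(k:ℝ)^6)*(5/3*(k:ℝ)^2 - 1/18))*(m:ℝ)^4
        + (9/(4*(k:ℝ)^6)*(-40/9*(k:ℝ)^3 + 4/9*(k:ℝ)))*(m:ℝ)^3
        + (9/(4*(k:ℝ)^6)*(20/3*(k:ℝ)^4 - 4/3*(k:ℝ)^2 + 1/36))*(m:ℝ)^2
        + (9/(4*(k:ℝ)^6)*(-16/3*(k:ℝ)^5 + 16/9*(k:ℝ)^3 - 1/9*(k:ℝ)))*(m:ℝ)
        + (9/(4*(k:ℝ)^6)*(16/9*(k:ℝ)^6 - 8/9*(k:ℝ)^4 + 1/9*(k:ℝ)^2)) := by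
    intro m hm
    simp only [Finset.mem_Ico] at hm
    unfold lam22
    rw [Tsum2 k m (by omega) (by omega)]
    ring
  rw [Finset.sum_congr rfl e1, Finset.sum_congr rfl e2,
    sum_sextic_Ico _ _ _ _ _ _ _ _ _ (show 1 ≤ k+1 by omega),
    sum_sextic_Ico _ _ _ _ _ _ _ _ _ (show k+1 ≤ 2*k by omega)]
  simp only [fau, Fpoly]
  push_cast
  field_simp
  ring

/-- **The constant `151/280` in the asymptotic variance (Theorem 1 of the paper):**
`(1/k) Σ_{m=1}^{2k−1} λ(2,2)_m² → 151/280` as `k → ∞`. -/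
theorem stmt_13 :
    Tendsto (fun k : ℕ => (1 / (k : ℝ)) * ∑ m ∈ Finset.Icc 1 (2 * k - 1), (lam22 k m) ^ 2)
      atTop (nhds (151 / 280)) := by
  have hinv : Tendsto (fun k : ℕ => ((k : ℝ)⁻¹)) atTop (nhds 0) :=
    tendsto_inv_atTop_nhds_zero_nat
  have hF : Continuous Fpoly := by unfold Fpoly; continuity
  have h0 : Fpoly 0 = 151/280 := by norm_num [Fpoly]
  have hcomp : Tendsto (fun k : ℕ => Fpoly ((k : ℝ)⁻¹)) atTop (nhds (151/280)) := by
    rw [← h0]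
    exact (hF.tendsto 0).comp hinv
  refine hcomp.congr' ?_
  filter_upwards [eventually_ge_atTop 1] with k hk
  exact (key k hk).symm
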